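/- In the shot-noise Cox process setup, assume Φ is a simple point process, fix k ≥ 1 and measurable f : X → [0,∞), g : X^k → [0,∞), and assume: (a) almost surely E[∫_{D_k} g(x₁,…,x_k) exp(−Φ(f) + Σ_{j=1}^k f(x_j)) Φ^{⊗k}(dx₁ … dx_k) | Λ] = exp(−∫_X (1 − e^{−f}) T_Λ dμ) · ∫_{X^k} g(x₁,…,x_k) ∏_{j=1}^k T_Λ(x_j) μ^{⊗k}(dx) (the multivariate Mecke identity of a Poisson process with intensity T_Λ·μ, applied conditionally); and (b) Λ satisfies the Poisson exponential-moment formula with intensity ν. Then E[∫_{D_k} g(x₁,…,x_k) exp(−Φ(f) + Σ_{j=1}^k f(x_j)) Φ^{⊗k}(dx)] = ∫_{X^k} g(x₁,…,x_k) · L(f) · Σ_{𝒫} ∏_{J∈𝒫} ψ_{x_J}(f) μ^{⊗k}(dx), where L(f) = exp(−∫_{X×(0,∞)} (1 − exp(−γ ∫_X (1−e^{−f(y)}) κ(y;θ) μ(dy))) ν(dθ,dγ)) and ψ_{x_J}(f) = ∫_{X×(0,∞)} exp(−γ ∫_X (1−e^{−f(y)}) κ(y;θ) μ(dy)) · γ^{|J|}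 ∏_{j∈J} κ(x_j; θ) ν(dθ,dγ). This identity expresses that, for M_Φ^{(k)}-a.e. (x₁,…,x_k), the reduced Palm version of the shot-noise Cox process Φ at (x₁,…,x_k) is distributed as the independent sum of Φ and component processes Φ_{ζ_{x_J}} over the blocks J of a random partition T of {1,…,k} with P(T = 𝒫) proportional to ∏_{J∈𝒫} η(x_J). -/

import Mathlib

open MeasureTheory

/-- `expNeg t = e^{-t}` for `t ∈ [0,∞]`, with `expNeg ∞ = 0`. -/
noncomputable def expNeg (t : ENNReal) : ENNReal :=
  if t = ⊤ then 0 else ENNReal.ofReal (Real.exp (-t.toReal))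

/-- The set `D_k` of `k`-tuples with pairwise distinct coordinates. -/
def distinctTuples (X : Type*) (k : ℕ) : Set (Fin k → X) :=
  {t : Fin k → X | Function.Injective t}

/-- A random measure `Λ` satisfies the Poisson exponential-moment formula with
intensity `ν`: for every `m ≥ 1` and measurable `h, c₁, …, c_m ≥ 0`,
`E[e^{−Λ(h)} ∏ⱼ Λ(cⱼ)] = e^{−∫(1−e^{−h})dν} Σ_𝒫 ∏_{J∈𝒫} ∫ e^{−h} ∏_{j∈J} cⱼ dν`. -/
def PoissonExpMoment {Ω Y : Type*} [MeasurableSpace Ω] [MeasurableSpace Y]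
    (P : Measure Ω) (Λ : Ω → Measure Y) (ν : Measure Y) : Prop :=
  ∀ (m : ℕ), 1 ≤ m → ∀ h : Y → ENNReal, Measurable h →
    ∀ c : Fin m → Y → ENNReal, (∀ j, Measurable (c j)) →
    ∫⁻ ω, expNeg (∫⁻ z, h z ∂(Λ ω)) * ∏ j, ∫⁻ z, c j z ∂(Λ ω) ∂P
      = expNeg (∫⁻ z, (1 - expNeg (h z)) ∂ν)
        * ∑ pt : Finpartition (Finset.univ : Finset (Fin m)),
            ∏ J ∈ pt.parts, ∫⁻ z, expNeg (h z) * ∏ j ∈ J, c j z ∂ν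

open scoped ENNReal NNReal

lemma expNeg_top : expNeg ⊤ = 0 := by simp [expNeg]

lemma measurable_expNeg : Measurable expNeg := by
  unfold expNeg
  exact Measurable.ite (measurableSet_eq)
    measurable_const
    (ENNReal.measurable_ofReal.comp
      (Real.continuous_exp.measurable.comp ENNReal.measurable_toReal.neg))

lemma expNeg_le_one (t : ENNReal) : expNeg t ≤ 1 := by
  unfold expNeg
  split
  · exact zero_le_one
  · rw [← ENNReal.ofReal_one]
    exact ENNReal.ofReal_le_ofReal
      (Real.exp_le_one_iff.mpr (neg_nonpos.mpr ENNReal.toReal_nonneg))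

lemma expNeg_anti : Antitone expNeg := by
  intro a b hab
  unfold expNeg
  by_cases hb : b = ⊤
  · simp [hb]
  · have ha : a ≠ ⊤ := fun h => hb (top_le_iff.mp (h ▸ hab))
    rw [if_neg ha, if_neg hb]
    exact ENNReal.ofReal_le_ofReal (Real.exp_le_exp.mpr
      (neg_le_neg (ENNReal.toReal_mono hb hab)))

lemma one_sub_expNeg_le (t : ENNReal) : 1 - expNeg t ≤ t := by
  by_cases ht : t = ⊤
  · simp [ht]
  rw [expNeg, if_neg ht, tsub_le_iff_right]
  have h1 : (1 : ℝ) - t.toReal ≤ Real.exp (-t.toReal) := by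
    have := Real.add_one_le_exp (-t.toReal); linarith
  calc (1 : ENNReal) = ENNReal.ofReal 1 := ENNReal.ofReal_one.symm
    _ ≤ ENNReal.ofReal (t.toReal + Real.exp (-t.toReal)) :=
        ENNReal.ofReal_le_ofReal (by linarith)
    _ ≤ ENNReal.ofReal t.toReal + ENNReal.ofReal (Real.exp (-t.toReal)) :=
        ENNReal.ofReal_add_le
    _ ≤ t + ENNReal.ofReal (Real.exp (-t.toReal)) :=
        add_le_add ENNReal.ofReal_toReal_le le_rfl

open ProbabilityTheory in
lemma measurable_lintegral_of_finite {α β : Type*} [MeasurableSpace α] [MeasurableSpace β]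
    (κ : Kernel α β) (hκfin : ∀ a, IsFiniteMeasure (κ a))
    {f : α × β → ℝ≥0∞} (hf : Measurable f) :
    Measurable fun a => ∫⁻ b, f (a, b) ∂κ a := by
  have heq : (fun a => ∫⁻ b, f (a, b) ∂κ a)
      = fun a => ⨆ n, ∫⁻ b, SimpleFunc.eapprox f n (a, b) ∂κ a := by
    funext a
    have : ∀ b, f (a, b) = ⨆ n, SimpleFunc.eapprox f n (a, b) := fun b =>
      (SimpleFunc.iSup_eapprox_apply hf (a, b)).symm
    simp_rw [this]
    exact lintegral_iSup (fun n => (SimpleFunc.eapprox f n).measurable.comp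
      measurable_prodMk_left) (fun i j hij b => SimpleFunc.monotone_eapprox f hij _)
  rw [heq]
  refine Measurable.iSup fun n => ?_
  refine SimpleFunc.induction
    (motive := fun s : SimpleFunc (α × β) ℝ≥0∞ => Measurable fun a => ∫⁻ b, s (a, b) ∂κ a)
    ?_ ?_ (SimpleFunc.eapprox f n)
  · intro c t ht
    simp only [SimpleFunc.const_zero, SimpleFunc.coe_piecewise, SimpleFunc.coe_const,
      SimpleFunc.coe_zero, Set.piecewise_eq_indicator]
    have : ∀ a, ∫⁻ b, t.indicator (Function.const (α × β) c) (a, b) ∂κ a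
        = c * κ a (Prod.mk a ⁻¹' t) := fun a =>
      lintegral_indicator_const_comp measurable_prodMk_left ht c
    simp_rw [this]
    exact (Kernel.measurable_kernel_prodMk_left_of_finite ht hκfin).const_mul c
  · intro s₁ s₂ _ hm1 hm2
    simp only [SimpleFunc.coe_add, Pi.add_apply]
    have : ∀ a, ∫⁻ b, s₁ (a, b) + s₂ (a, b) ∂κ a
        = (∫⁻ b, s₁ (a, b) ∂κ a) + ∫⁻ b, s₂ (a, b) ∂κ a := fun a =>
      lintegral_add_left (s₁.measurable.comp measurable_prodMk_left) _
    simp_rw [this]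
    exact hm1.add hm2

/-- higher-order reduced Palm distributions of a shot-noise Cox
process, in Campbell–Laplace form.  Under the conditional multivariate Mecke
identity (a) and the Poisson exponential-moment formula (b) for `Λ`,
`E[∫_{D_k} g(x) e^{−Φ(f)+Σⱼf(xⱼ)} Φ^{⊗k}(dx)]
  = ∫ g(x) L(f) Σ_𝒫 ∏_{J∈𝒫} ψ_{x_J}(f) μ^{⊗k}(dx)`. -/
theorem sncp_reduced_palm_campbell_laplace
    {Ω X : Type*} [MeasurableSpace Ω] [MeasurableSpace X]
    (P : Measure Ω) [IsProbabilityMeasure P]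
    (μ : Measure X) [SigmaFinite μ]
    (ν : Measure (X × NNReal)) [SigmaFinite ν] (hν0 : ν {z | z.2 = 0} = 0)
    (κ : X → X → ENNReal) (hκ : Measurable (Function.uncurry κ))
    (hκ1 : ∀ θ : X, ∫⁻ y, κ y θ ∂μ = 1)
    (Λ : Ω → Measure (X × NNReal)) (hΛmeas : Measurable Λ)
    (hΛ : ∀ h : X × NNReal → ENNReal, Measurable h →
      ∫⁻ ω, expNeg (∫⁻ z, h z ∂(Λ ω)) ∂P = expNeg (∫⁻ z, (1 - expNeg (h z)) ∂ν))
    (hTfin : ∀ᵐ ω ∂P, ∀ᵐ y ∂μ, (∫⁻ z, (z.2 : ENNReal) * κ y z.1 ∂(Λ ω)) ≠ ⊤)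
    (Φ : Ω → Measure X) (hΦmeas : Measurable Φ)
    (hcond : ∀ f : X → ENNReal, Measurable f →
      ∀ G : Measure (X × NNReal) → ENNReal, Measurable G →
      ∫⁻ ω, expNeg (∫⁻ y, f y ∂(Φ ω)) * G (Λ ω) ∂P
        = ∫⁻ ω, expNeg (∫⁻ y, (1 - expNeg (f y))
            * (∫⁻ z, (z.2 : ENNReal) * κ y z.1 ∂(Λ ω)) ∂μ) * G (Λ ω) ∂P)
    -- `Φ` is a simple point process
    (hpp : ∀ᵐ ω ∂P, ∀ B : Set X, MeasurableSet B → Φ ω B = ⊤ ∨ ∃ n : ℕ, Φ ω B = n)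
    (hsimple : ∀ᵐ ω ∂P, ∀ y : X, Φ ω {y} ≤ 1)
    (k : ℕ) (hk : 1 ≤ k)
    (f : X → ENNReal) (hf : Measurable f)
    (g : (Fin k → X) → ENNReal) (hg : Measurable g)
    -- (a) conditional multivariate Mecke identity for `Φ` given `Λ`
    (ha : ∀ G : Measure (X × NNReal) → ENNReal, Measurable G →
      ∫⁻ ω, (∫⁻ t in distinctTuples X k,
            g t * expNeg ((∫⁻ y, f y ∂(Φ ω)) - ∑ j, f (t j))
          ∂(Measure.pi fun _ : Fin k => Φ ω)) * G (Λ ω) ∂P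
        = ∫⁻ ω, (expNeg (∫⁻ y, (1 - expNeg (f y))
              * (∫⁻ z, (z.2 : ENNReal) * κ y z.1 ∂(Λ ω)) ∂μ)
            * ∫⁻ t, g t * ∏ j, (∫⁻ z, (z.2 : ENNReal) * κ (t j) z.1 ∂(Λ ω))
                ∂(Measure.pi fun _ : Fin k => μ)) * G (Λ ω) ∂P)
    -- (b) Poisson exponential-moment formula for `Λ`
    (hb : PoissonExpMoment P Λ ν) :
    ∫⁻ ω, ∫⁻ t in distinctTuples X k,
        g t * expNeg ((∫⁻ y, f y ∂(Φ ω)) - ∑ j, f (t j))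
      ∂(Measure.pi fun _ : Fin k => Φ ω) ∂P
      = ∫⁻ t, g t
          * expNeg (∫⁻ z, (1 - expNeg ((z.2 : ENNReal)
              * ∫⁻ y, (1 - expNeg (f y)) * κ y z.1 ∂μ)) ∂ν)
          * ∑ pt : Finpartition (Finset.univ : Finset (Fin k)),
              ∏ J ∈ pt.parts,
                ∫⁻ z, expNeg ((z.2 : ENNReal) * ∫⁻ y, (1 - expNeg (f y)) * κ y z.1 ∂μ)
                  * ((z.2 : ENNReal) ^ J.card * ∏ j ∈ J, κ (t j) z.1) ∂ν
        ∂(Measure.pi fun _ : Fin k => μ) := by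
  classical
  -- basic measurability
  have hcm : Measurable fun y => 1 - expNeg (f y) :=
    measurable_const.sub (measurable_expNeg.comp hf)
  have hκy : ∀ y : X, Measurable fun z : X × NNReal => (z.2 : ENNReal) * κ y z.1 :=
    fun y => (measurable_coe_nnreal_ennreal.comp measurable_snd).mul
      (hκ.comp (measurable_const.prodMk measurable_fst))
  have hBm : Measurable fun θ : X => ∫⁻ y, (1 - expNeg (f y)) * κ y θ ∂μ :=
    Measurable.lintegral_prod_right'
      (f := fun q : X × X => (1 - expNeg (f q.2)) * κ q.2 q.1)
      ((hcm.comp measurable_snd).mul (hκ.comp (measurable_snd.prodMk measurable_fst)))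
  have hhm : Measurable fun z : X × NNReal =>
      (z.2 : ENNReal) * ∫⁻ y, (1 - expNeg (f y)) * κ y z.1 ∂μ :=
    (measurable_coe_nnreal_ennreal.comp measurable_snd).mul (hBm.comp measurable_fst)
  -- a strictly positive ν-integrable function
  obtain ⟨g₀, hg₀pos, hg₀m, hg₀int⟩ := exists_pos_lintegral_lt_of_sigmaFinite ν one_ne_zero
  set h₀ : X × NNReal → ℝ≥0∞ := fun z => (g₀ z : ℝ≥0∞) with hh₀def
  have hh₀m : Measurable h₀ := measurable_coe_nnreal_ennreal.comp hg₀m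
  have hC : (∫⁻ z, h₀ z ∂ν) ≠ ⊤ := (hg₀int.trans ENNReal.one_lt_top).ne
  have hh₀pos : ∀ z, h₀ z ≠ 0 := fun z => ENNReal.coe_ne_zero.mpr (hg₀pos z).ne'
  -- the good event and the modified random measure
  have hlintΛ : Measurable fun ω => ∫⁻ z, h₀ z ∂(Λ ω) :=
    (Measure.measurable_lintegral hh₀m).comp hΛmeas
  set Sfin : Set Ω := {ω | (∫⁻ z, h₀ z ∂(Λ ω)) < ⊤} with hSdef
  have hSfinM : MeasurableSet Sfin := measurableSet_lt hlintΛ measurable_const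
  set Λ' : Ω → Measure (X × NNReal) := Sfin.piecewise Λ (fun _ => 0) with hΛ'def
  have hΛ'meas : Measurable Λ' := Measurable.piecewise hSfinM hΛmeas measurable_const
  have hΛ'fin : ∀ ω, (∫⁻ z, h₀ z ∂(Λ' ω)) ≠ ⊤ := by
    intro ω
    by_cases hω : ω ∈ Sfin
    · rw [hΛ'def, Set.piecewise_eq_of_mem _ _ _ hω]
      exact (show (∫⁻ z, h₀ z ∂(Λ ω)) < ⊤ from hω).ne
    · rw [hΛ'def, Set.piecewise_eq_of_notMem _ _ _ hω]
      simp
  -- spanning sets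
  set U : ℕ → Set (X × NNReal) := fun n => {z | ((n + 1 : ℕ) : ℝ≥0∞)⁻¹ ≤ h₀ z} with hUdef
  have hUm : ∀ n, MeasurableSet (U n) := fun n => measurableSet_le measurable_const hh₀m
  have hUuniv : (⋃ n, U n) = Set.univ := by
    rw [Set.eq_univ_iff_forall]
    intro z
    obtain ⟨n, hn⟩ := ENNReal.exists_inv_nat_lt (hh₀pos z)
    refine Set.mem_iUnion.mpr ⟨n, ?_⟩
    show ((n + 1 : ℕ) : ℝ≥0∞)⁻¹ ≤ h₀ z
    exact le_trans (ENNReal.inv_le_inv' (by exact_mod_cast Nat.le_succ n)) hn.le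
  have hUfin : ∀ ω n, Λ' ω (U n) < ⊤ := by
    intro ω n
    have hb2 := mul_meas_ge_le_lintegral₀ (hh₀m.aemeasurable (μ := Λ' ω))
      (((n + 1 : ℕ) : ℝ≥0∞))⁻¹
    rw [lt_top_iff_ne_top]
    intro hM
    rw [hUdef] at hM
    rw [hM, ENNReal.mul_top (by simp)] at hb2
    exact hΛ'fin ω (top_le_iff.mp hb2)
  have hsig : ∀ ω, SigmaFinite (Λ' ω) :=
    fun ω => ⟨⟨⟨fun n => U n, fun _ => Set.mem_univ _, fun n => hUfin ω n, hUuniv⟩⟩⟩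
  -- the good event has full probability
  have hPS : P Sfin = 1 := by
    have key : ∀ n : ℕ,
        ENNReal.ofReal (Real.exp (-((∫⁻ z, h₀ z ∂ν).toReal / (n + 1)))) ≤ P Sfin := by
      intro n
      have hmn : Measurable fun z => h₀ z * ((n + 1 : ℕ) : ℝ≥0∞)⁻¹ := hh₀m.mul_const _
      have hid := hΛ _ hmn
      have hle : (∫⁻ ω, expNeg (∫⁻ z, h₀ z * ((n + 1 : ℕ) : ℝ≥0∞)⁻¹ ∂(Λ ω)) ∂P)
          ≤ P Sfin := by
        have hpt : ∀ ω, expNeg (∫⁻ z, h₀ z * ((n + 1 : ℕ) : ℝ≥0∞)⁻¹ ∂(Λ ω))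
            ≤ Sfin.indicator (fun _ => 1) ω := by
          intro ω
          by_cases hω : ω ∈ Sfin
          · rw [Set.indicator_of_mem hω]; exact expNeg_le_one _
          · rw [Set.indicator_of_notMem hω]
            have h3 : (∫⁻ z, h₀ z ∂(Λ ω)) = ⊤ := by
              by_contra h4
              exact hω (lt_top_iff_ne_top.mpr h4)
            have h2 : (∫⁻ z, h₀ z * ((n + 1 : ℕ) : ℝ≥0∞)⁻¹ ∂(Λ ω)) = ⊤ := by
              rw [lintegral_mul_const _ hh₀m, h3, ENNReal.top_mul (by simp)]
            rw [h2, expNeg_top]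
        calc (∫⁻ ω, expNeg (∫⁻ z, h₀ z * ((n + 1 : ℕ) : ℝ≥0∞)⁻¹ ∂(Λ ω)) ∂P)
            ≤ ∫⁻ ω, Sfin.indicator (fun _ => 1) ω ∂P := lintegral_mono hpt
          _ = P Sfin := by rw [lintegral_indicator_const hSfinM, one_mul]
      have hge : ENNReal.ofReal (Real.exp (-((∫⁻ z, h₀ z ∂ν).toReal / (n + 1))))
          ≤ expNeg (∫⁻ z, (1 - expNeg (h₀ z * ((n + 1 : ℕ) : ℝ≥0∞)⁻¹)) ∂ν) := by
        have h1 : (∫⁻ z, (1 - expNeg (h₀ z * ((n + 1 : ℕ) : ℝ≥0∞)⁻¹)) ∂ν)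
            ≤ (∫⁻ z, h₀ z ∂ν) * ((n + 1 : ℕ) : ℝ≥0∞)⁻¹ := by
          rw [← lintegral_mul_const _ hh₀m]
          exact lintegral_mono fun z => one_sub_expNeg_le _
        refine le_trans (le_of_eq ?_) (expNeg_anti h1)
        have hfin2 : (∫⁻ z, h₀ z ∂ν) * ((n + 1 : ℕ) : ℝ≥0∞)⁻¹ ≠ ⊤ :=
          ENNReal.mul_ne_top hC (by simp)
        rw [expNeg, if_neg hfin2, ENNReal.toReal_mul, ENNReal.toReal_inv,
          ENNReal.toReal_natCast]
        congr 2
        push_cast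
        ring
      exact ((hge.trans (le_of_eq hid.symm)).trans hle)
    have htend : Filter.Tendsto
        (fun n : ℕ => ENNReal.ofReal (Real.exp (-((∫⁻ z, h₀ z ∂ν).toReal / (n + 1)))))
        Filter.atTop (nhds 1) := by
      have t1 : Filter.Tendsto (fun n : ℕ => (∫⁻ z, h₀ z ∂ν).toReal / (n + 1))
          Filter.atTop (nhds 0) := by
        have := tendsto_one_div_add_atTop_nhds_zero_nat.const_mul
          (∫⁻ z, h₀ z ∂ν).toReal
        simpa [mul_one_div, div_eq_mul_inv] using this
      have t2 := (Real.continuous_exp.tendsto 0).comp (by simpa using t1.neg :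
        Filter.Tendsto (fun n : ℕ => -((∫⁻ z, h₀ z ∂ν).toReal / (n + 1)))
          Filter.atTop (nhds 0))
      have t3 := (ENNReal.continuous_ofReal.tendsto 1).comp (by simpa using t2)
      rwa [ENNReal.ofReal_one] at t3
    exact le_antisymm prob_le_one (le_of_tendsto' htend key)
  have hae : ∀ᵐ ω ∂P, Λ' ω = Λ ω := by
    rw [Filter.eventually_iff, MeasureTheory.mem_ae_iff]
    refine measure_mono_null (t := Sfinᶜ) (fun ω hω hmem => ?_) ?_
    · exact hω (by rw [hΛ'def]; exact Set.piecewise_eq_of_mem _ _ _ hmem)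
    · rw [measure_compl hSfinM (measure_ne_top P _), hPS, measure_univ, tsub_self]
  -- joint measurability of the shot-noise field for the modified random measure
  set V : ℕ → Set (X × NNReal) := disjointed U with hVdef
  have hVm : ∀ n, MeasurableSet (V n) := MeasurableSet.disjointed hUm
  have hVdisj : Pairwise (Function.onFun Disjoint V) := disjoint_disjointed U
  have hVuniv : (⋃ n, V n) = Set.univ := by rw [hVdef, iUnion_disjointed, hUuniv]
  have hVfin : ∀ ω n, IsFiniteMeasure ((Λ' ω).restrict (V n)) := by
    intro ω n
    refine ⟨?_⟩
    rw [Measure.restrict_apply_univ]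
    exact lt_of_le_of_lt (measure_mono (disjointed_subset U n)) (hUfin ω n)
  have hTj : Measurable fun p : Ω × X => ∫⁻ z, (z.2 : ENNReal) * κ p.2 z.1 ∂(Λ' p.1) := by
    have heq : (fun p : Ω × X => ∫⁻ z, (z.2 : ENNReal) * κ p.2 z.1 ∂(Λ' p.1))
        = fun p => ∑' n, ∫⁻ z in V n, (z.2 : ENNReal) * κ p.2 z.1 ∂(Λ' p.1) := by
      funext p
      rw [← lintegral_iUnion hVm hVdisj, hVuniv, Measure.restrict_univ]
    rw [heq]
    refine Measurable.ennreal_tsum fun n => ?_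
    set K : ProbabilityTheory.Kernel Ω (X × NNReal) := ⟨Λ', hΛ'meas⟩ with hKdef
    have hKn : ∀ p : Ω × X,
        (((K.restrict (hVm n)).comap Prod.fst (measurable_fst : Measurable (Prod.fst : Ω × X → Ω))) p) = (Λ' p.1).restrict (V n) := by
      intro p
      rw [ProbabilityTheory.Kernel.comap_apply, ProbabilityTheory.Kernel.restrict_apply]
      rfl
    have hfinK : ∀ p : Ω × X,
        IsFiniteMeasure (((K.restrict (hVm n)).comap Prod.fst (measurable_fst : Measurable (Prod.fst : Ω × X → Ω))) p) := by
      intro p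
      rw [hKn p]
      exact hVfin p.1 n
    have hm := measurable_lintegral_of_finite
      ((K.restrict (hVm n)).comap Prod.fst (measurable_fst : Measurable (Prod.fst : Ω × X → Ω))) hfinK
      (f := fun q : (Ω × X) × (X × NNReal) => (q.2.2 : ENNReal) * κ q.1.2 q.2.1)
      ((measurable_coe_nnreal_ennreal.comp (measurable_snd.comp measurable_snd)).mul
        (hκ.comp ((measurable_snd.comp measurable_fst).prodMk
          (measurable_fst.comp measurable_snd))))
    simpa only [hKn] using hm
  -- measurability of the shot-noise field for a fixed sigma-finite measure
  have hTm : ∀ m : Measure (X × NNReal), SigmaFinite m →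
      Measurable fun y : X => ∫⁻ z, (z.2 : ENNReal) * κ y z.1 ∂m := by
    intro m hm
    haveI := hm
    exact Measurable.lintegral_prod_right'
      (f := fun q : X × (X × NNReal) => (q.2.2 : ENNReal) * κ q.1 q.2.1)
      ((measurable_coe_nnreal_ennreal.comp (measurable_snd.comp measurable_snd)).mul
        (hκ.comp (measurable_fst.prodMk (measurable_fst.comp measurable_snd))))
  -- the Fubini swap for the modified random measure
  have hswap : ∀ ω,
      (∫⁻ y, (1 - expNeg (f y)) * (∫⁻ z, (z.2 : ENNReal) * κ y z.1 ∂(Λ' ω)) ∂μ)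
        = ∫⁻ z, (z.2 : ENNReal) * (∫⁻ y, (1 - expNeg (f y)) * κ y z.1 ∂μ) ∂(Λ' ω) := by
    intro ω
    haveI := hsig ω
    have h1 : ∀ y : X, (1 - expNeg (f y)) * (∫⁻ z, (z.2 : ENNReal) * κ y z.1 ∂(Λ' ω))
        = ∫⁻ z, (1 - expNeg (f y)) * ((z.2 : ENNReal) * κ y z.1) ∂(Λ' ω) := fun y =>
      (lintegral_const_mul _ (hκy y)).symm
    simp_rw [h1]
    rw [lintegral_lintegral_swap
      (f := fun (y : X) (z : X × NNReal) => (1 - expNeg (f y)) * ((z.2 : ENNReal) * κ y z.1))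
      (((hcm.comp measurable_fst).mul
        ((measurable_coe_nnreal_ennreal.comp (measurable_snd.comp measurable_snd)).mul
          (hκ.comp (measurable_fst.prodMk (measurable_fst.comp measurable_snd))))).aemeasurable)]
    refine lintegral_congr fun z => ?_
    have hκz : Measurable fun y : X => (1 - expNeg (f y)) * κ y z.1 :=
      hcm.mul (hκ.comp (measurable_id.prodMk measurable_const))
    rw [← lintegral_const_mul _ hκz]
    exact lintegral_congr fun y => by ring
  -- measurability of ω ↦ ∫ h dΛ'ω
  have hEΛ' : Measurable fun ω =>
      ∫⁻ z, (z.2 : ENNReal) * (∫⁻ y, (1 - expNeg (f y)) * κ y z.1 ∂μ) ∂(Λ' ω) :=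
    (Measure.measurable_lintegral hhm).comp hΛ'meas
  -- Step 1: conditional Mecke identity with G ≡ 1
  have step1 := ha (fun _ => 1) measurable_const
  simp only [mul_one] at step1
  rw [step1]
  -- Step 2: chain of rewritings
  calc
    ∫⁻ ω, expNeg (∫⁻ y, (1 - expNeg (f y))
          * (∫⁻ z, (z.2 : ENNReal) * κ y z.1 ∂(Λ ω)) ∂μ)
        * ∫⁻ t, g t * ∏ j, (∫⁻ z, (z.2 : ENNReal) * κ (t j) z.1 ∂(Λ ω))
            ∂(Measure.pi fun _ : Fin k => μ) ∂P
      = ∫⁻ ω, expNeg (∫⁻ y, (1 - expNeg (f y))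
            * (∫⁻ z, (z.2 : ENNReal) * κ y z.1 ∂(Λ' ω)) ∂μ)
          * ∫⁻ t, g t * ∏ j, (∫⁻ z, (z.2 : ENNReal) * κ (t j) z.1 ∂(Λ' ω))
              ∂(Measure.pi fun _ : Fin k => μ) ∂P :=
        (lintegral_congr_ae (hae.mono fun ω hωe => by simp only [hωe])).symm
    _ = ∫⁻ ω, ∫⁻ t, g t * (expNeg (∫⁻ z, (z.2 : ENNReal)
            * (∫⁻ y, (1 - expNeg (f y)) * κ y z.1 ∂μ) ∂(Λ' ω))
          * ∏ j, (∫⁻ z, (z.2 : ENNReal) * κ (t j) z.1 ∂(Λ' ω)))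
            ∂(Measure.pi fun _ : Fin k => μ) ∂P := by
        refine lintegral_congr fun ω => ?_
        haveI := hsig ω
        have htmeas : Measurable fun t : Fin k → X =>
            g t * ∏ j, ∫⁻ z, (z.2 : ENNReal) * κ (t j) z.1 ∂(Λ' ω) := by
          refine hg.mul (Finset.measurable_prod _ fun j _ => ?_)
          exact (hTm (Λ' ω) (hsig ω)).comp (measurable_pi_apply j)
        rw [hswap ω, ← lintegral_const_mul _ htmeas]
        exact lintegral_congr fun t => mul_left_comm _ _ _
    _ = ∫⁻ t, ∫⁻ ω, g t * (expNeg (∫⁻ z, (z.2 : ENNReal)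
            * (∫⁻ y, (1 - expNeg (f y)) * κ y z.1 ∂μ) ∂(Λ' ω))
          * ∏ j, (∫⁻ z, (z.2 : ENNReal) * κ (t j) z.1 ∂(Λ' ω))) ∂P
            ∂(Measure.pi fun _ : Fin k => μ) := by
        refine lintegral_lintegral_swap ?_
        refine Measurable.aemeasurable ?_
        refine Measurable.mul (hg.comp measurable_snd) ?_
        refine Measurable.mul
          (measurable_expNeg.comp (hEΛ'.comp measurable_fst)) ?_
        refine Finset.measurable_prod _ fun j _ => ?_
        exact hTj.comp (measurable_fst.prodMk
          ((measurable_pi_apply j).comp measurable_snd))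
    _ = ∫⁻ t, g t
          * expNeg (∫⁻ z, (1 - expNeg ((z.2 : ENNReal)
              * ∫⁻ y, (1 - expNeg (f y)) * κ y z.1 ∂μ)) ∂ν)
          * ∑ pt : Finpartition (Finset.univ : Finset (Fin k)),
              ∏ J ∈ pt.parts,
                ∫⁻ z, expNeg ((z.2 : ENNReal) * ∫⁻ y, (1 - expNeg (f y)) * κ y z.1 ∂μ)
                  * ((z.2 : ENNReal) ^ J.card * ∏ j ∈ J, κ (t j) z.1) ∂ν
            ∂(Measure.pi fun _ : Fin k => μ) := by
        refine lintegral_congr fun t => ?_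
        have hb' := hb k hk
          (fun z => (z.2 : ENNReal) * ∫⁻ y, (1 - expNeg (f y)) * κ y z.1 ∂μ) hhm
          (fun j z => (z.2 : ENNReal) * κ (t j) z.1) (fun j => hκy (t j))
        have hωm : Measurable fun ω => expNeg (∫⁻ z, (z.2 : ENNReal)
            * (∫⁻ y, (1 - expNeg (f y)) * κ y z.1 ∂μ) ∂(Λ' ω))
            * ∏ j, ∫⁻ z, (z.2 : ENNReal) * κ (t j) z.1 ∂(Λ' ω) := by
          refine (measurable_expNeg.comp hEΛ').mul
            (Finset.measurable_prod _ fun j _ => ?_)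
          exact hTj.comp (measurable_id.prodMk measurable_const)
        calc
          ∫⁻ ω, g t * (expNeg (∫⁻ z, (z.2 : ENNReal)
                * (∫⁻ y, (1 - expNeg (f y)) * κ y z.1 ∂μ) ∂(Λ' ω))
              * ∏ j, (∫⁻ z, (z.2 : ENNReal) * κ (t j) z.1 ∂(Λ' ω))) ∂P
            = g t * ∫⁻ ω, expNeg (∫⁻ z, (z.2 : ENNReal)
                  * (∫⁻ y, (1 - expNeg (f y)) * κ y z.1 ∂μ) ∂(Λ' ω))
                * ∏ j, (∫⁻ z, (z.2 : ENNReal) * κ (t j) z.1 ∂(Λ' ω)) ∂P :=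
              lintegral_const_mul _ hωm
          _ = g t * ∫⁻ ω, expNeg (∫⁻ z, (z.2 : ENNReal)
                  * (∫⁻ y, (1 - expNeg (f y)) * κ y z.1 ∂μ) ∂(Λ ω))
                * ∏ j, (∫⁻ z, (z.2 : ENNReal) * κ (t j) z.1 ∂(Λ ω)) ∂P := by
              refine congrArg (fun r => g t * r)
                (lintegral_congr_ae (hae.mono fun ω hωe => by simp only [hωe]))
          _ = g t * (expNeg (∫⁻ z, (1 - expNeg ((z.2 : ENNReal)
                  * ∫⁻ y, (1 - expNeg (f y)) * κ y z.1 ∂μ)) ∂ν)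
                * ∑ pt : Finpartition (Finset.univ : Finset (Fin k)),
                    ∏ J ∈ pt.parts,
                      ∫⁻ z, expNeg ((z.2 : ENNReal)
                          * ∫⁻ y, (1 - expNeg (f y)) * κ y z.1 ∂μ)
                        * ∏ j ∈ J, ((z.2 : ENNReal) * κ (t j) z.1) ∂ν) := by
              rw [hb']
          _ = g t * (expNeg (∫⁻ z, (1 - expNeg ((z.2 : ENNReal)
                  * ∫⁻ y, (1 - expNeg (f y)) * κ y z.1 ∂μ)) ∂ν)
                * ∑ pt : Finpartition (Finset.univ : Finset (Fin k)),
                    ∏ J ∈ pt.parts,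
                      ∫⁻ z, expNeg ((z.2 : ENNReal)
                          * ∫⁻ y, (1 - expNeg (f y)) * κ y z.1 ∂μ)
                        * ((z.2 : ENNReal) ^ J.card * ∏ j ∈ J, κ (t j) z.1) ∂ν) := by
              simp only [Finset.prod_mul_distrib, Finset.prod_const]
          _ = g t * expNeg (∫⁻ z, (1 - expNeg ((z.2 : ENNReal)
                  * ∫⁻ y, (1 - expNeg (f y)) * κ y z.1 ∂μ)) ∂ν)
                * ∑ pt : Finpartition (Finset.univ : Finset (Fin k)),
                    ∏ J ∈ pt.parts,
                      ∫⁻ z, expNeg ((z.2 : ENNReal)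
                          * ∫⁻ y, (1 - expNeg (f y)) * κ y z.1 ∂μ)
                        * ((z.2 : ENNReal) ^ J.card * ∏ j ∈ J, κ (t j) z.1) ∂ν :=
              (mul_assoc _ _ _).symm
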